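/- If the initial configuration satisfies p_i ≠ j and p_j ≠ i for an edge (i,j) with i < j, then at most two steps of the execution contain an i,j-move. -/

import Mathlib

structure Config (V : Type*) where
  p : V → Option V
  m : V → Bool

variable {V : Type*}

def PRmarried (G : SimpleGraph V) (p : V → Option V) (i : V) : Prop :=
  ∃ j, G.Adj i j ∧ p i = some j ∧ p j = some i

def PRwaiting (G : SimpleGraph V) (p : V → Option V) (i : V) : Prop :=
  ∃ j, G.Adj i j ∧ p i = some j ∧ p j ≠ some i ∧ ¬ PRmarried G p j

def PRcondemned (G : SimpleGraph V) (p : V → Option V) (i : V) : Prop :=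
  ∃ j, G.Adj i j ∧ p i = some j ∧ p j ≠ some i ∧ PRmarried G p j

def PRdead (G : SimpleGraph V) (p : V → Option V) (i : V) : Prop :=
  p i = none ∧ ∀ j, G.Adj i j → PRmarried G p j

def PRfree (G : SimpleGraph V) (p : V → Option V) (i : V) : Prop :=
  p i = none ∧ ∃ j, G.Adj i j ∧ ¬ PRmarried G p j

def Valid (G : SimpleGraph V) (C : Config V) : Prop :=
  ∀ i j, C.p i = some j → G.Adj i j

section Rules
variable [LinearOrder V]

def UpdateEnabled (G : SimpleGraph V) (C : Config V) (i : V) : Prop :=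
  ¬ (C.m i = true ↔ PRmarried G C.p i)

def MarriageEnabled (G : SimpleGraph V) (C : Config V) (i : V) : Prop :=
  (C.m i = true ↔ PRmarried G C.p i) ∧ C.p i = none ∧ ∃ j, G.Adj i j ∧ C.p j = some i

def SeductionEnabled (G : SimpleGraph V) (C : Config V) (i : V) : Prop :=
  (C.m i = true ↔ PRmarried G C.p i) ∧ C.p i = none ∧
    (∀ k, G.Adj i k → C.p k ≠ some i) ∧
    ∃ j, G.Adj i j ∧ C.p j = none ∧ i < j ∧ C.m j = false

def AbandonmentEnabled (G : SimpleGraph V) (C : Config V) (i : V) : Prop :=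
  (C.m i = true ↔ PRmarried G C.p i) ∧
    ∃ j, G.Adj i j ∧ C.p i = some j ∧ C.p j ≠ some i ∧ (C.m j = true ∨ j ≤ i)

def Eligible (G : SimpleGraph V) (C : Config V) (i : V) : Prop :=
  UpdateEnabled G C i ∨ MarriageEnabled G C i ∨ SeductionEnabled G C i ∨ AbandonmentEnabled G C i

def Stable (G : SimpleGraph V) (C : Config V) : Prop := ∀ i, ¬ Eligible G C i

def Unchanged (C C' : Config V) (i : V) : Prop := C'.p i = C.p i ∧ C'.m i = C.m i

def DoesUpdate (G : SimpleGraph V) (C C' : Config V) (i : V) : Prop :=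
  UpdateEnabled G C i ∧ C'.p i = C.p i ∧ (C'.m i = true ↔ PRmarried G C.p i)

def DoesMarriageTo (G : SimpleGraph V) (C C' : Config V) (i j : V) : Prop :=
  MarriageEnabled G C i ∧ G.Adj i j ∧ C.p j = some i ∧ C'.p i = some j ∧ C'.m i = C.m i

def DoesSeductionTo (G : SimpleGraph V) (C C' : Config V) (i j : V) : Prop :=
  SeductionEnabled G C i ∧ G.Adj i j ∧ C.p j = none ∧ i < j ∧ C.m j = false ∧
    (∀ k, G.Adj i k → C.p k = none → i < k → C.m k = false → k ≤ j) ∧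
    C'.p i = some j ∧ C'.m i = C.m i

def DoesAbandonmentFrom (G : SimpleGraph V) (C C' : Config V) (i j : V) : Prop :=
  AbandonmentEnabled G C i ∧ C.p i = some j ∧ C'.p i = none ∧ C'.m i = C.m i

def Moves (G : SimpleGraph V) (C C' : Config V) (i : V) : Prop :=
  DoesUpdate G C C' i ∨ (∃ j, DoesMarriageTo G C C' i j) ∨
    (∃ j, DoesSeductionTo G C C' i j) ∨ (∃ j, DoesAbandonmentFrom G C C' i j)

def Step (G : SimpleGraph V) (C C' : Config V) : Prop :=
  (∃ i, Moves G C C' i) ∧ ∀ i, Moves G C C' i ∨ Unchanged C C' i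

def MSAMoveTo (G : SimpleGraph V) (C C' : Config V) (i j : V) : Prop :=
  DoesMarriageTo G C C' i j ∨ DoesSeductionTo G C C' i j ∨ DoesAbandonmentFrom G C C' i j

def IJMove (G : SimpleGraph V) (C C' : Config V) (i j : V) : Prop :=
  MSAMoveTo G C C' i j ∨ MSAMoveTo G C C' j i

end Rules


section Helpers
variable [LinearOrder V] {G : SimpleGraph V} {C C' : Config V}

lemma step_p_some (hS : Step G C C') {x y : V} (h : C'.p x = some y) (h0 : C.p x ≠ some y) :
    DoesMarriageTo G C C' x y ∨ DoesSeductionTo G C C' x y := by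
  rcases hS.2 x with (hup | ⟨j', hmar⟩ | ⟨j', hsed⟩ | ⟨j', hab⟩) | hu
  · exact absurd (hup.2.1.symm.trans h) h0
  · have hj : j' = y := Option.some.inj ((hmar.2.2.2.1).symm.trans h)
    exact Or.inl (hj ▸ hmar)
  · have hj : j' = y := Option.some.inj ((hsed.2.2.2.2.2.2.1).symm.trans h)
    exact Or.inr (hj ▸ hsed)
  · rw [hab.2.2.1] at h; exact nomatch h
  · exact absurd (hu.1.symm.trans h) h0

lemma step_p_loss (hS : Step G C C') {x y : V} (h : C.p x = some y) (h' : C'.p x ≠ some y) :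
    DoesAbandonmentFrom G C C' x y := by
  rcases hS.2 x with (hup | ⟨j', hmar⟩ | ⟨j', hsed⟩ | ⟨j', hab⟩) | hu
  · exact absurd (hup.2.1.trans h) h'
  · exact absurd (hmar.1.2.1.symm.trans h) (by simp)
  · exact absurd (hsed.1.2.1.symm.trans h) (by simp)
  · have hj : j' = y := Option.some.inj ((hab.2.1).symm.trans h)
    exact hj ▸ hab
  · exact absurd (hu.1.trans h) h'

lemma step_m_to_true (hS : Step G C C') {x : V} (h0 : C.m x = false) (h1 : C'.m x = true) :
    PRmarried G C.p x := by
  rcases hS.2 x with (hup | ⟨j', hmar⟩ | ⟨j', hsed⟩ | ⟨j', hab⟩) | hu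
  · exact hup.2.2.mp h1
  · rw [hmar.2.2.2.2, h0] at h1; exact Bool.noConfusion h1
  · rw [hsed.2.2.2.2.2.2.2, h0] at h1; exact Bool.noConfusion h1
  · rw [hab.2.2.2, h0] at h1; exact Bool.noConfusion h1
  · rw [hu.2, h0] at h1; exact Bool.noConfusion h1

lemma married_persist (hS : Step G C C') {a b : V}
    (h1 : C.p a = some b) (h2 : C.p b = some a) :
    C'.p a = some b ∧ C'.p b = some a := by
  constructor
  · by_contra h
    obtain ⟨⟨_, j', _, hpa, hne, _⟩, _⟩ := step_p_loss hS h1 h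
    have hj : j' = b := Option.some.inj (hpa.symm.trans h1)
    exact hne (hj ▸ h2)
  · by_contra h
    obtain ⟨⟨_, j', _, hpa, hne, _⟩, _⟩ := step_p_loss hS h2 h
    have hj : j' = a := Option.some.inj (hpa.symm.trans h2)
    exact hne (hj ▸ h1)

end Helpers

open scoped Classical in
theorem ij_moves_at_most_two_of_no_initial_pointer [Fintype V] [LinearOrder V]
    (G : SimpleGraph V)
    (C : ℕ → Config V) (L : ℕ) (hstep : ∀ t, t < L → Step G (C t) (C (t+1)))
    (hvalid : Valid G (C 0))
    (i j : V) (hadj : G.Adj i j) (hlt : i < j)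
    (h0i : (C 0).p i ≠ some j) (h0j : (C 0).p j ≠ some i) :
    ((Finset.range L).filter (fun t => IJMove G (C t) (C (t+1)) i j)).card ≤ 2 := by
  have key : ∀ t, t ≤ L →
      (((Finset.range t).filter (fun s => IJMove G (C s) (C (s+1)) i j)).card = 0 ∧
        (C t).p i ≠ some j ∧ (C t).p j ≠ some i) ∨
      (((Finset.range t).filter (fun s => IJMove G (C s) (C (s+1)) i j)).card ≤ 1 ∧
        (C t).p i = some j ∧ (C t).p j ≠ some i ∧
        ((C t).m j = true → ∃ k, k ≠ i ∧ (C t).p j = some k ∧ (C t).p k = some j)) ∨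
      (((Finset.range t).filter (fun s => IJMove G (C s) (C (s+1)) i j)).card ≤ 2 ∧
        (C t).p i = some j ∧ (C t).p j = some i) ∨
      (((Finset.range t).filter (fun s => IJMove G (C s) (C (s+1)) i j)).card ≤ 2 ∧
        (C t).p i ≠ some j ∧ ∃ k, k ≠ i ∧ (C t).p j = some k ∧ (C t).p k = some j) := by
    intro t
    induction t with
    | zero => intro _; exact Or.inl ⟨by simp, h0i, h0j⟩
    | succ t ih =>
      intro ht
      have ht' : t < L := ht
      have hS := hstep t ht'
      have hinv := ih (Nat.le_of_lt ht')
      have hcnt : ((Finset.range (t+1)).filter (fun s => IJMove G (C s) (C (s+1)) i j)).card =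
          ((Finset.range t).filter (fun s => IJMove G (C s) (C (s+1)) i j)).card +
            (if IJMove G (C t) (C (t+1)) i j then 1 else 0) := by
        rw [Finset.range_add_one, Finset.filter_insert]
        split
        · rw [Finset.card_insert_of_notMem (by simp)]
        · simp
      by_cases hmv : IJMove G (C t) (C (t+1)) i j
      · -- an i,j-move happens at step t
        have hmv2 := hmv
        rcases hinv with ⟨hc0, h1, h2⟩ | ⟨hc1, hpi, hpj, hmarm⟩ | ⟨hc2, hpi, hpj⟩ |
            ⟨hc2, hpi, k, hk, hjk1, hjk2⟩
        · -- state A : first move must be a seduction by i toward j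
          rcases hmv2 with (hm1 | hm2 | hm3) | (hm4 | hm5 | hm6)
          · exact absurd hm1.2.2.1 h2
          · -- seduction i → j
            have hpjnone : (C t).p j = none := hm2.2.2.1
            have hmjf : (C t).m j = false := hm2.2.2.2.2.1
            refine Or.inr (Or.inl ⟨?_, hm2.2.2.2.2.2.2.1, ?_, ?_⟩)
            · rw [hcnt, if_pos hmv, hc0]
            · intro h
              rcases step_p_some hS h h2 with hmar' | hsed'
              · exact h1 hmar'.2.2.1
              · exact absurd hsed'.2.2.2.1 (not_lt.mpr hlt.le)
            · intro hmm
              exfalso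
              obtain ⟨k, _, hk, _⟩ := step_m_to_true hS hmjf hmm
              rw [hpjnone] at hk; exact nomatch hk
          · exact absurd hm3.2.1 h1
          · exact absurd hm4.2.2.1 h1
          · exact absurd hm5.2.2.2.1 (not_lt.mpr hlt.le)
          · exact absurd hm6.2.1 h2
        · -- state B : second move is abandonment by i or marriage by j
          rcases hmv2 with (hm1 | hm2 | hm3) | (hm4 | hm5 | hm6)
          · rw [hm1.1.2.1] at hpi; exact nomatch hpi
          · rw [hm2.1.2.1] at hpi; exact nomatch hpi
          · -- abandonment by i from j
            obtain ⟨⟨_, j', _, hpij', hne', hor⟩, hpi_eq, hpi', _⟩ := hm3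
            have hj' : j' = j := Option.some.inj (hpij'.symm.trans hpi)
            rw [hj'] at hor
            have hmt : (C t).m j = true := by
              rcases hor with h | h
              · exact h
              · exact absurd h (not_le.mpr hlt)
            obtain ⟨k, hk, hjk1, hjk2⟩ := hmarm hmt
            obtain ⟨ha, hb⟩ := married_persist hS hjk1 hjk2
            refine Or.inr (Or.inr (Or.inr ⟨?_, ?_, k, hk, ha, hb⟩))
            · rw [hcnt, if_pos hmv]; omega
            · rw [hpi']; simp
          · -- marriage by j toward i
            have hpjnone : (C t).p j = none := hm4.1.2.1
            have hmjf : (C t).m j = false := by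
              cases hmb : (C t).m j with
              | false => rfl
              | true =>
                obtain ⟨k, _, hk, _⟩ := hm4.1.1.mp hmb
                rw [hpjnone] at hk; exact nomatch hk
            have hpi' : (C (t+1)).p i = some j := by
              by_contra h
              obtain ⟨⟨_, j', _, hpij', hne', hor⟩, _, _, _⟩ := step_p_loss hS hpi h
              have hj' : j' = j := Option.some.inj (hpij'.symm.trans hpi)
              rw [hj'] at hor
              rcases hor with h' | h'
              · rw [hmjf] at h'; exact Bool.noConfusion h'
              · exact absurd h' (not_le.mpr hlt)
            refine Or.inr (Or.inr (Or.inl ⟨?_, hpi', hm4.2.2.2.1⟩))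
            rw [hcnt, if_pos hmv]; omega
          · exact absurd hm5.2.2.2.1 (not_lt.mpr hlt.le)
          · exact absurd hm6.2.1 hpj
        · -- state C : no i,j-move possible
          exfalso
          rcases hmv2 with (hm1 | hm2 | hm3) | (hm4 | hm5 | hm6)
          · rw [hm1.1.2.1] at hpi; exact nomatch hpi
          · rw [hm2.1.2.1] at hpi; exact nomatch hpi
          · obtain ⟨⟨_, j', _, hpij', hne', _⟩, _⟩ := hm3
            have hj' : j' = j := Option.some.inj (hpij'.symm.trans hpi)
            rw [hj'] at hne'; exact hne' hpj
          · rw [hm4.1.2.1] at hpj; exact nomatch hpj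
          · exact absurd hm5.2.2.2.1 (not_lt.mpr hlt.le)
          · obtain ⟨⟨_, j', _, hpij', hne', _⟩, _⟩ := hm6
            have hj' : j' = i := Option.some.inj (hpij'.symm.trans hpj)
            rw [hj'] at hne'; exact hne' hpi
        · -- state D : no i,j-move possible
          exfalso
          rcases hmv2 with (hm1 | hm2 | hm3) | (hm4 | hm5 | hm6)
          · exact hk (Option.some.inj (hjk1.symm.trans hm1.2.2.1))
          · rw [hm2.2.2.1] at hjk1; exact nomatch hjk1
          · exact hpi hm3.2.1
          · rw [hm4.1.2.1] at hjk1; exact nomatch hjk1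
          · exact absurd hm5.2.2.2.1 (not_lt.mpr hlt.le)
          · exact hk (Option.some.inj (hjk1.symm.trans hm6.2.1))
      · -- no i,j-move at step t : the state is preserved
        rcases hinv with ⟨hc0, h1, h2⟩ | ⟨hc1, hpi, hpj, hmarm⟩ | ⟨hc2, hpi, hpj⟩ |
            ⟨hc2, hpi, k, hk, hjk1, hjk2⟩
        · refine Or.inl ⟨?_, ?_, ?_⟩
          · rw [hcnt, if_neg hmv, hc0]
          · intro h
            rcases step_p_some hS h h1 with hmar' | hsed'
            · exact hmv (Or.inl (Or.inl hmar'))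
            · exact hmv (Or.inl (Or.inr (Or.inl hsed')))
          · intro h
            rcases step_p_some hS h h2 with hmar' | hsed'
            · exact h1 hmar'.2.2.1
            · exact absurd hsed'.2.2.2.1 (not_lt.mpr hlt.le)
        · refine Or.inr (Or.inl ⟨?_, ?_, ?_, ?_⟩)
          · rw [hcnt, if_neg hmv]; omega
          · by_contra h
            exact hmv (Or.inl (Or.inr (Or.inr (step_p_loss hS hpi h))))
          · intro h
            rcases step_p_some hS h hpj with hmar' | hsed'
            · exact hmv (Or.inr (Or.inl hmar'))
            · exact absurd hsed'.2.2.2.1 (not_lt.mpr hlt.le)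
          · intro hmm
            cases hmb : (C t).m j with
            | true =>
              obtain ⟨k, hk, hjk1, hjk2⟩ := hmarm hmb
              obtain ⟨ha, hb⟩ := married_persist hS hjk1 hjk2
              exact ⟨k, hk, ha, hb⟩
            | false =>
              obtain ⟨k, _, hjk1, hjk2⟩ := step_m_to_true hS hmb hmm
              have hk : k ≠ i := by rintro rfl; exact hpj hjk1
              obtain ⟨ha, hb⟩ := married_persist hS hjk1 hjk2
              exact ⟨k, hk, ha, hb⟩
        · obtain ⟨ha, hb⟩ := married_persist hS hpi hpj
          refine Or.inr (Or.inr (Or.inl ⟨?_, ha, hb⟩))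
          rw [hcnt, if_neg hmv]; omega
        · obtain ⟨ha, hb⟩ := married_persist hS hjk1 hjk2
          refine Or.inr (Or.inr (Or.inr ⟨?_, ?_, k, hk, ha, hb⟩))
          · rw [hcnt, if_neg hmv]; omega
          · intro h
            rcases step_p_some hS h hpi with hmar' | hsed'
            · exact hk (Option.some.inj (hjk1.symm.trans hmar'.2.2.1))
            · rw [hsed'.2.2.1] at hjk1; exact nomatch hjk1
  rcases key L le_rfl with ⟨h, _⟩ | ⟨h, _⟩ | ⟨h, _⟩ | ⟨h, _⟩ <;> omega
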